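/- arXiv:2305.10017 — 2 statements merged into one kernel-verified Lean document; each statement's English description precedes it below -/
import Mathlib

section
/- For all real numbers φ, θ, z: exp(φ•(cos θ • X + sin θ • Y)) · exp(z•Z) equals the 2×2 real matrix with entries M₁₁ = cosh(φ/2)cos(z/2) + sinh(φ/2)cos(θ + z/2), M₁₂ = −cosh(φ/2)sin(z/2) − sinh(φ/2)sin(θ + z/2), M₂₁ = cosh(φ/2)sin(z/2) − sinh(φ/2)sin(θ + z/2), M₂₂ = cosh(φ/2)cos(z/2) − sinh(φ/2)cos(θ + z/2). -/
open scoped Matrix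

/-- The matrix `X` generating `sl(2,ℝ)`. -/
noncomputable def X : Matrix (Fin 2) (Fin 2) ℝ := (1 / 2 : ℝ) • !![1, 0; 0, -1]

/-- The matrix `Y` generating `sl(2,ℝ)`. -/
noncomputable def Y : Matrix (Fin 2) (Fin 2) ℝ := (1 / 2 : ℝ) • !![0, -1; -1, 0]

/-- The matrix `Z` generating `sl(2,ℝ)`. -/
noncomputable def Z : Matrix (Fin 2) (Fin 2) ℝ := (1 / 2 : ℝ) • !![0, -1; 1, 0]

lemma exp_smul_involution (t : ℝ) (B : Matrix (Fin 2) (Fin 2) ℝ) (hB : B * B = 1) :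
    NormedSpace.exp (t • B) = Real.cosh t • 1 + Real.sinh t • B := by
  have hBpow : ∀ n : ℕ, B ^ (2 * n) = 1 := by
    intro n
    rw [pow_mul, pow_two, hB, one_pow]
  have hBodd : ∀ n : ℕ, B ^ (2 * n + 1) = B := by
    intro n
    rw [pow_succ, hBpow, one_mul]
  have he : HasSum (fun k : ℕ => ((Nat.factorial (2 * k)) : ℝ)⁻¹ • (t • B) ^ (2 * k))
      (Real.cosh t • 1) := by
    have := (Real.hasSum_cosh t).smul_const (1 : Matrix (Fin 2) (Fin 2) ℝ)
    convert this using 2 with k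
    simp only [smul_pow, hBpow, smul_smul]
    congr 1
    rw [div_eq_mul_inv]
    ring
  have ho : HasSum (fun k : ℕ => ((Nat.factorial (2 * k + 1)) : ℝ)⁻¹ • (t • B) ^ (2 * k + 1))
      (Real.sinh t • B) := by
    have := (Real.hasSum_sinh t).smul_const B
    convert this using 2 with k
    simp only [smul_pow, hBodd, smul_smul]
    congr 1
    rw [div_eq_mul_inv]
    ring
  have h := HasSum.even_add_odd (f := fun n : ℕ => ((Nat.factorial n : ℝ))⁻¹ • (t • B) ^ n) he ho
  rw [NormedSpace.exp_eq_tsum (𝕂 := ℝ)]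
  exact h.tsum_eq

lemma exp_smul_complex_structure (t : ℝ) (B : Matrix (Fin 2) (Fin 2) ℝ) (hB : B * B = -1) :
    NormedSpace.exp (t • B) = Real.cos t • 1 + Real.sin t • B := by
  have hBpow : ∀ n : ℕ, B ^ (2 * n) = (-1 : ℝ) ^ n • 1 := by
    intro n
    rw [pow_mul, pow_two, hB]
    induction n with
    | zero => simp
    | succ m ih => rw [pow_succ, ih, pow_succ]; simp [smul_smul, mul_comm]
  have hBodd : ∀ n : ℕ, B ^ (2 * n + 1) = (-1 : ℝ) ^ n • B := by
    intro n
    rw [pow_succ, hBpow, smul_mul_assoc, one_mul]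
  have he : HasSum (fun k : ℕ => ((Nat.factorial (2 * k)) : ℝ)⁻¹ • (t • B) ^ (2 * k))
      (Real.cos t • 1) := by
    have := (Real.hasSum_cos t).smul_const (1 : Matrix (Fin 2) (Fin 2) ℝ)
    convert this using 2 with k
    simp only [smul_pow, hBpow, smul_smul]
    congr 1
    rw [div_eq_mul_inv]
    ring
  have ho : HasSum (fun k : ℕ => ((Nat.factorial (2 * k + 1)) : ℝ)⁻¹ • (t • B) ^ (2 * k + 1))
      (Real.sin t • B) := by
    have := (Real.hasSum_sin t).smul_const B
    convert this using 2 with k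
    simp only [smul_pow, hBodd, smul_smul]
    congr 1
    rw [div_eq_mul_inv]
    ring
  have h := HasSum.even_add_odd (f := fun n : ℕ => ((Nat.factorial n : ℝ))⁻¹ • (t • B) ^ n) he ho
  rw [NormedSpace.exp_eq_tsum (𝕂 := ℝ)]
  exact h.tsum_eq

/-- The cylindrical-coordinates matrix form of elements of `SL(2,ℝ)`. -/
theorem sl2_cylindrical_matrix (φ θ z : ℝ) :
    NormedSpace.exp (φ • (Real.cos θ • X + Real.sin θ • Y)) *
        NormedSpace.exp (z • Z) =
      !![Real.cosh (φ / 2) * Real.cos (z / 2) + Real.sinh (φ / 2) * Real.cos (θ + z / 2),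
          -(Real.cosh (φ / 2) * Real.sin (z / 2)) - Real.sinh (φ / 2) * Real.sin (θ + z / 2);
          Real.cosh (φ / 2) * Real.sin (z / 2) - Real.sinh (φ / 2) * Real.sin (θ + z / 2),
          Real.cosh (φ / 2) * Real.cos (z / 2) - Real.sinh (φ / 2) * Real.cos (θ + z / 2)] := by
  set B : Matrix (Fin 2) (Fin 2) ℝ := !![Real.cos θ, -Real.sin θ; -Real.sin θ, -Real.cos θ]
    with hBdef
  set J : Matrix (Fin 2) (Fin 2) ℝ := !![0, -1; 1, 0] with hJdef
  have hB : B * B = 1 := by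
    ext i j
    fin_cases i <;> fin_cases j <;>
      simp [hBdef, Matrix.mul_apply, Fin.sum_univ_succ, Matrix.one_apply] <;>
      nlinarith [Real.sin_sq_add_cos_sq θ]
  have hJ : J * J = -1 := by
    ext i j
    fin_cases i <;> fin_cases j <;>
      simp [hJdef, Matrix.mul_apply, Fin.sum_univ_succ, Matrix.one_apply]
  have h1 : φ • (Real.cos θ • X + Real.sin θ • Y) = (φ / 2) • B := by
    ext i j
    fin_cases i <;> fin_cases j <;>
      simp [hBdef, X, Y] <;> ring
  have h2 : z • Z = (z / 2) • J := by
    ext i j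
    fin_cases i <;> fin_cases j <;> simp [hJdef, Z] <;> ring
  rw [h1, h2, exp_smul_involution _ _ hB, exp_smul_complex_structure _ _ hJ]
  ext i j
  fin_cases i <;> fin_cases j <;>
    simp [hBdef, hJdef, Matrix.mul_apply, Fin.sum_univ_succ, Matrix.one_apply,
      Real.cos_add, Real.sin_add] <;> ring
end

section
/- Let φx, φy, α, β be real numbers and set M = exp(−φx•(cos α • X + sin α • Y)) · exp(φy•(cos β • X + sin β • Y)) as a product of 2×2 real matrices. Then (M₁₁ + M₂₂)/2 = cosh(φx/2)·cosh(φy/2) − sinh(φx/2)·sinh(φy/2)·cos(α − β). (Applied with α = θx + zx and β = θy + zx, this gives the equation cosh(φ/2)cos(z/2) = cosh(φx/2)cosh(φy/2) − sinh(φx/2)sinh(φy/2)cos(θy−θx) for the cylindrical coordinates (φ,θ,z) of x⁻¹y in SL(2,ℝ).) -/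
open scoped Matrix

/-- Auxiliary matrix `B a = 2 (cos a • X + sin a • Y)`; it satisfies `(B a)² = 1`. -/
noncomputable def Bm (a : ℝ) : Matrix (Fin 2) (Fin 2) ℝ :=
  !![Real.cos a, -Real.sin a; -Real.sin a, -Real.cos a]

/-- Exponential of a multiple of `Bm a`, via diagonalization. -/
lemma exp_smul_Bm (s a : ℝ) :
    NormedSpace.exp (s • Bm a) =
      Real.cosh s • (1 : Matrix (Fin 2) (Fin 2) ℝ) + Real.sinh s • Bm a := by
  set c := Real.cos (a / 2) with hc
  set sn := Real.sin (a / 2) with hsn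
  have hcs : c ^ 2 + sn ^ 2 = 1 := by
    simp [hc, hsn, Real.cos_sq_add_sin_sq]
  have hca : Real.cos a = c ^ 2 - sn ^ 2 := by
    have h2 : a = 2 * (a / 2) := by ring
    rw [h2, Real.cos_two_mul', ← hc, ← hsn]
  have hsa : Real.sin a = 2 * sn * c := by
    have h2 : a = 2 * (a / 2) := by ring
    rw [h2, Real.sin_two_mul]
  set Um : Matrix (Fin 2) (Fin 2) ℝ := !![c, sn; -sn, c] with hUm
  set Vm : Matrix (Fin 2) (Fin 2) ℝ := !![c, -sn; sn, c] with hVm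
  have h1 : Um * Vm = 1 := by
    ext i j; fin_cases i <;> fin_cases j <;>
      simp [Um, Vm, Matrix.mul_apply, Fin.sum_univ_two] <;> nlinarith [hcs]
  have h2 : Vm * Um = 1 := by
    ext i j; fin_cases i <;> fin_cases j <;>
      simp [Um, Vm, Matrix.mul_apply, Fin.sum_univ_two] <;> nlinarith [hcs]
  set U : (Matrix (Fin 2) (Fin 2) ℝ)ˣ := ⟨Um, Vm, h1, h2⟩ with hU
  have hdiag : Matrix.diagonal ![s, -s] = !![s, 0; 0, -s] := by
    ext i j; fin_cases i <;> fin_cases j <;> simp [Matrix.diagonal]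
  have hdiag2 : Matrix.diagonal (NormedSpace.exp ![s, -s]) =
      !![Real.exp s, 0; 0, Real.exp (-s)] := by
    have he : NormedSpace.exp ![s, -s] = ![Real.exp s, Real.exp (-s)] := by
      ext i
      have : NormedSpace.exp ![s, -s] i = NormedSpace.exp (![s, -s] i) := by
        exact Pi.coe_exp _ i
      fin_cases i <;> simp [this, ← Real.exp_eq_exp_ℝ]
    rw [he]; ext i j; fin_cases i <;> fin_cases j <;> simp [Matrix.diagonal]
  have hconj : s • Bm a = (U : Matrix (Fin 2) (Fin 2) ℝ) * Matrix.diagonal ![s, -s] *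
      ((U⁻¹ : (Matrix (Fin 2) (Fin 2) ℝ)ˣ) : Matrix (Fin 2) (Fin 2) ℝ) := by
    show s • Bm a = Um * Matrix.diagonal ![s, -s] * Vm
    rw [hdiag]
    ext i j; fin_cases i <;> fin_cases j <;>
      simp [Um, Vm, Bm, Matrix.mul_apply, Fin.sum_univ_two, hca, hsa] <;> ring
  rw [hconj, Matrix.exp_units_conj, Matrix.exp_diagonal, hdiag2]
  show Um * _ * Vm = _
  ext i j
  fin_cases i <;> fin_cases j
  · simp [Um, Vm, Bm, Matrix.mul_apply, Fin.sum_univ_two,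
      Matrix.one_apply, Real.cosh_eq, Real.sinh_eq, hca, hsa]
    linear_combination ((Real.exp s + Real.exp (-s)) / 2) * hcs
  · simp [Um, Vm, Bm, Matrix.mul_apply, Fin.sum_univ_two,
      Matrix.one_apply, Real.cosh_eq, Real.sinh_eq, hca, hsa]
    ring
  · simp [Um, Vm, Bm, Matrix.mul_apply, Fin.sum_univ_two,
      Matrix.one_apply, Real.cosh_eq, Real.sinh_eq, hca, hsa]
    ring
  · simp [Um, Vm, Bm, Matrix.mul_apply, Fin.sum_univ_two,
      Matrix.one_apply, Real.cosh_eq, Real.sinh_eq, hca, hsa]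
    linear_combination ((Real.exp s + Real.exp (-s)) / 2) * hcs

/-- The half-trace of
`exp(−φx•(cos α • X + sin α • Y)) · exp(φy•(cos β • X + sin β • Y))` equals
`cosh(φx/2)cosh(φy/2) − sinh(φx/2)sinh(φy/2)cos(α − β)`. -/
theorem sl2_product_half_trace (φx φy α β : ℝ) :
    ((NormedSpace.exp ((-φx) • (Real.cos α • X + Real.sin α • Y)) *
          NormedSpace.exp (φy • (Real.cos β • X + Real.sin β • Y))) 0 0 +
        (NormedSpace.exp ((-φx) • (Real.cos α • X + Real.sin α • Y)) *
          NormedSpace.exp (φy • (Real.cos β • X + Real.sin β • Y))) 1 1) / 2 =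
      Real.cosh (φx / 2) * Real.cosh (φy / 2) -
        Real.sinh (φx / 2) * Real.sinh (φy / 2) * Real.cos (α - β) := by
  have key : ∀ t a : ℝ, t • (Real.cos a • X + Real.sin a • Y) = (t / 2) • Bm a := by
    intro t a
    ext i j; fin_cases i <;> fin_cases j <;> simp [X, Y, Bm] <;> ring
  rw [key, key, exp_smul_Bm, exp_smul_Bm]
  have hch : Real.cosh (-φx / 2) = Real.cosh (φx / 2) := by
    rw [neg_div, Real.cosh_neg]
  have hsh : Real.sinh (-φx / 2) = -Real.sinh (φx / 2) := by
    rw [neg_div, Real.sinh_neg]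
  rw [hch, hsh, Real.cos_sub]
  simp [Bm, Matrix.mul_apply, Fin.sum_univ_two, Matrix.one_apply]
  ring
end
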